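/- The trace operator on partial measurable functions satisfies yanking: for any measurable space X, the trace of the symmetry map σ : X + X → X + X (which swaps the two summands, σ(inl x) = inr x and σ(inr x) = inl x) equals the identity function on X. -/
import Mathlib


/-- A partial function `f : X →. Y` is partial measurable when, for every measurable
set `A ⊆ Y`, the set of points where `f` is defined with value in `A` is measurable. -/
def PartialMeasurable {X Y : Type*} [MeasurableSpace X] [MeasurableSpace Y]
    (f : X →. Y) : Prop :=
  ∀ A : Set Y, MeasurableSet A → MeasurableSet {x | ∃ y ∈ f x, y ∈ A}

/-- The trace relation of `f : X + Z →. Y + Z`: `TraceRel f x y` holds iff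
`f (inl x) = inl y`, or there is a finite sequence `z₀, …, zₙ` in `Z` with
`f (inl x) = inr z₀`, `f (inr zᵢ) = inr zᵢ₊₁` for all `i < n`, and
`f (inr zₙ) = inl y`. -/
def TraceRel {X Y Z : Type*} (f : (X ⊕ Z) →. (Y ⊕ Z)) (x : X) (y : Y) : Prop :=
  Sum.inl y ∈ f (Sum.inl x) ∨
    ∃ (n : ℕ) (z : Fin (n + 1) → Z),
      Sum.inr (z 0) ∈ f (Sum.inl x) ∧
      (∀ i : Fin n, Sum.inr (z i.succ) ∈ f (Sum.inr (z i.castSucc))) ∧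
      Sum.inl y ∈ f (Sum.inr (z (Fin.last n)))

/-- `t` is a trace of `f` when the graph of `t` is exactly the trace relation of `f`. -/
def IsTrace {X Y Z : Type*} (f : (X ⊕ Z) →. (Y ⊕ Z)) (t : X →. Y) : Prop :=
  ∀ x y, y ∈ t x ↔ TraceRel f x y

/-- The symmetry map on `X + X`, swapping the two summands. -/
def sumSwap {X : Type*} : (X ⊕ X) →. (X ⊕ X) := fun s =>
  Part.some (Sum.elim Sum.inr Sum.inl s)


theorem traceRel_sumSwap {X : Type*} (x y : X) :
    TraceRel (sumSwap (X := X)) x y ↔ y = x := by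
  constructor
  · rintro (h | ⟨n, z, h0, hmid, hlast⟩)
    · simp [sumSwap, Part.mem_some_iff] at h
    · simp only [sumSwap, Sum.elim_inl, Sum.elim_inr, Part.mem_some_iff] at h0 hmid hlast
      obtain rfl : z 0 = x := Sum.inr.inj h0
      cases n with
      | zero =>
        have : Sum.inl y = Sum.inl (z (Fin.last 0)) := hlast
        have hy : y = z (Fin.last 0) := by injection this
        simpa [Fin.last] using hy
      | succ m => exact absurd (hmid 0) (by simp)
  · rintro rfl
    exact Or.inr ⟨0, fun _ => y, by simp [sumSwap], fun i => i.elim0, by simp [sumSwap, Fin.last]⟩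

/-- Yanking: the trace of the symmetry map `σ : X + X → X + X` is the identity on `X`. -/
theorem trace_yanking {X : Type*} [MeasurableSpace X] :
    (∃ t : X →. X, IsTrace (sumSwap (X := X)) t) ∧
    ∀ t : X →. X, IsTrace (sumSwap (X := X)) t → ∀ x, t x = Part.some x := by
  constructor
  · exact ⟨fun x => Part.some x, fun x y => by simp [Part.mem_some_iff, traceRel_sumSwap]⟩
  · intro t ht x
    ext y
    rw [ht, traceRel_sumSwap, Part.mem_some_iff]
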